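/- Let F ≥ 0 and let V be a nonsingular M-matrix with V⁻¹ ≥ 0, and suppose V − F is irreducible. If ρ(F V⁻¹) < 1 and u ≥ 0 with u ≠ 0, then the unique solution of (V − F) v = u is strictly positive; if ρ(F V⁻¹) > 1 and u ≥ 0 with u ≠ 0, then any solution v of (V − F) v = u has a strictly negative component. -/

import Mathlib

open Matrix Filter Topology
open scoped ENNReal NNReal

attribute [local instance] Matrix.linftyOpNormedRing Matrix.linftyOpNormedAlgebra

section Aux
variable {n : ℕ}

lemma myMapMulVec (A : Matrix (Fin n) (Fin n) ℝ) (x : Fin n → ℝ) :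
    (A.map Complex.ofReal) *ᵥ (fun i => (x i : ℂ)) = fun i => ((A *ᵥ x) i : ℂ) := by
  funext i
  simp [Matrix.mulVec, dotProduct, Matrix.map_apply]

lemma myExistsEig (A : Matrix (Fin n) (Fin n) ℂ) (μ : ℂ) (hμ : μ ∈ spectrum ℂ A) :
    ∃ x : Fin n → ℂ, x ≠ 0 ∧ A *ᵥ x = μ • x := by
  rw [spectrum.mem_iff] at hμ
  have hdet : (algebraMap ℂ (Matrix (Fin n) (Fin n) ℂ) μ - A).det = 0 := by
    by_contra h
    exact hμ ((Matrix.isUnit_iff_isUnit_det _).mpr (isUnit_iff_ne_zero.mpr h))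
  obtain ⟨x, hx0, hx⟩ := (Matrix.exists_mulVec_eq_zero_iff).mpr hdet
  refine ⟨x, hx0, ?_⟩
  rw [Matrix.sub_mulVec] at hx
  have h1 : (algebraMap ℂ (Matrix (Fin n) (Fin n) ℂ) μ) *ᵥ x = μ • x := by
    rw [Algebra.algebraMap_eq_smul_one, Matrix.smul_mulVec, Matrix.one_mulVec]
  have := sub_eq_zero.mp hx
  rw [h1] at this
  exact this.symm

lemma mySpecConj {A : Type*} [Ring A] [Algebra ℂ A] (a w vv : A)
    (h1 : w * vv = 1) (h2 : vv * w = 1) :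
    spectrum ℂ (w * a * vv) = spectrum ℂ a := by
  have hw : IsUnit w := ⟨⟨w, vv, h1, h2⟩, rfl⟩
  have hv : IsUnit vv := ⟨⟨vv, w, h2, h1⟩, rfl⟩
  ext μ
  simp only [spectrum.mem_iff, not_iff_not]
  have key : algebraMap ℂ A μ - w * a * vv = w * (algebraMap ℂ A μ - a) * vv := by
    rw [mul_sub, sub_mul]
    congr 1
    rw [← Algebra.commutes μ w, mul_assoc, h1, mul_one]
  rw [key]
  constructor
  · intro h
    have : algebraMap ℂ A μ - a = vv * (w * (algebraMap ℂ A μ - a) * vv) * w := by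
      rw [← mul_assoc, ← mul_assoc, h2, one_mul, mul_assoc, h2, mul_one]
    rw [this]
    exact (hv.mul h).mul hw
  · intro h
    exact (hw.mul h).mul hv

end Aux


section Aux2
variable {n : ℕ}

def Matrix.IsReducibleMat {n : ℕ} (A : Matrix (Fin n) (Fin n) ℝ) : Prop :=
  ∃ I J : Set (Fin n), I.Nonempty ∧ J.Nonempty ∧ Disjoint I J ∧ I ∪ J = Set.univ ∧
    ∀ p ∈ I, ∀ q ∈ J, A p q = 0

lemma myPosOfNonneg (A : Matrix (Fin n) (Fin n) ℝ)
    (hoff : ∀ p q, p ≠ q → A p q ≤ 0)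
    (hirr : ¬ A.IsReducibleMat)
    (u v : Fin n → ℝ) (hu : ∀ i, 0 ≤ u i) (hune : u ≠ 0)
    (hv : A.mulVec v = u) (hvnn : ∀ i, 0 ≤ v i) : ∀ i, 0 < v i := by
  by_contra h
  push_neg at h
  obtain ⟨i0, hi0⟩ := h
  apply hirr
  have hvne : v ≠ 0 := by
    rintro rfl
    rw [Matrix.mulVec_zero] at hv
    exact hune hv.symm
  obtain ⟨j0, hj0⟩ := Function.ne_iff.mp hvne
  refine ⟨{i | v i = 0}, {i | v i ≠ 0}, ⟨i0, le_antisymm hi0 (hvnn i0)⟩, ⟨j0, hj0⟩, ?_, ?_, ?_⟩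
  · rw [Set.disjoint_left]
    intro p hp hp'
    exact hp' hp
  · ext p
    simp [em]
  · intro p hp q hq
    have hterm : ∀ j ∈ Finset.univ, A p j * v j ≤ 0 := by
      intro j _
      rcases eq_or_ne j p with rfl | hjp
      · simp only [Set.mem_setOf_eq] at hp
        simp [hp]
      · exact mul_nonpos_of_nonpos_of_nonneg (hoff p j (Ne.symm hjp)) (hvnn j)
    have hsum : ∑ j, A p j * v j = u p := congrFun hv p
    have hzero : ∑ j, A p j * v j = 0 :=
      le_antisymm (Finset.sum_nonpos hterm) (hsum ▸ hu p)
    have := (Finset.sum_eq_zero_iff_of_nonpos hterm).mp hzero q (Finset.mem_univ q)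
    simp only [Set.mem_setOf_eq] at hq
    rcases mul_eq_zero.mp this with h | h
    · exact h
    · exact absurd h hq

lemma myCollatz (N : Matrix (Fin n) (Fin n) ℝ) (hN : ∀ i j, 0 ≤ N i j)
    (v : Fin n → ℝ) (hvpos : ∀ i, 0 < v i) (hNv : ∀ i, (N *ᵥ v) i ≤ v i)
    (μ : ℂ) (hμ : μ ∈ spectrum ℂ (N.map Complex.ofReal)) : ‖μ‖ ≤ 1 := by
  obtain ⟨x, hx0, hx⟩ := myExistsEig _ μ hμ
  obtain ⟨i1, hi1⟩ := Function.ne_iff.mp hx0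
  obtain ⟨i0, -, hmax⟩ := Finset.exists_max_image Finset.univ
    (fun i => ‖x i‖ / v i) ⟨i1, Finset.mem_univ i1⟩
  set t : ℝ := ‖x i0‖ / v i0 with ht
  have htpos : 0 < t := by
    have h1 : ‖x i1‖ / v i1 ≤ t := hmax i1 (Finset.mem_univ i1)
    have : 0 < ‖x i1‖ / v i1 :=
      div_pos (norm_pos_iff.mpr (by simpa using hi1)) (hvpos i1)
    linarith
  have hwb : ∀ j, ‖x j‖ ≤ t * v j := by
    intro j
    have := hmax j (Finset.mem_univ j)
    rw [div_le_iff₀ (hvpos j)] at this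
    linarith [this]
  have hentry : (N.map Complex.ofReal *ᵥ x) i0 = μ * x i0 := by
    rw [hx]; rfl
  have hLHS : ‖μ‖ * ‖x i0‖ ≤ t * v i0 := by
    calc ‖μ‖ * ‖x i0‖ = ‖(N.map Complex.ofReal *ᵥ x) i0‖ := by
          rw [hentry, norm_mul]
      _ ≤ ∑ j, N i0 j * ‖x j‖ := by
          rw [show (N.map Complex.ofReal *ᵥ x) i0 = ∑ j, (N i0 j : ℂ) * x j from rfl]
          refine le_trans (norm_sum_le _ _) ?_
          refine Finset.sum_le_sum fun j _ => ?_
          rw [norm_mul, Complex.norm_real, Real.norm_eq_abs, abs_of_nonneg (hN i0 j)]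
      _ ≤ ∑ j, N i0 j * (t * v j) := by
          refine Finset.sum_le_sum fun j _ => ?_
          exact mul_le_mul_of_nonneg_left (hwb j) (hN i0 j)
      _ = t * ∑ j, N i0 j * v j := by
          rw [Finset.mul_sum]; congr 1; funext j; ring
      _ ≤ t * v i0 := by
          have : ∑ j, N i0 j * v j = (N *ᵥ v) i0 := rfl
          rw [this]
          exact mul_le_mul_of_nonneg_left (hNv i0) (le_of_lt htpos)
  have hwi0 : ‖x i0‖ = t * v i0 := by
    rw [ht, div_mul_cancel₀]
    exact ne_of_gt (hvpos i0)
  rw [hwi0] at hLHS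
  have hpos : 0 < t * v i0 := mul_pos htpos (hvpos i0)
  nlinarith

end Aux2

section Aux3
variable {n : ℕ}

lemma myGelfand (A : Matrix (Fin n) (Fin n) ℂ)
    (hA : ∀ μ ∈ spectrum ℂ A, ‖μ‖ < 1) :
    ∃ r : ℝ≥0, r < 1 ∧ ∀ᶠ k in atTop, ‖A ^ k‖₊ ≤ r ^ k := by
  have hρ : spectralRadius ℂ A < 1 := by
    rw [spectralRadius]
    rcases Set.eq_empty_or_nonempty (spectrum ℂ A) with he | hne
    · simp [he]
    · have hfin := (Matrix.finite_spectrum A).toFinset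
      obtain ⟨μ0, hμ0mem, hμ0⟩ := Finset.exists_max_image (Matrix.finite_spectrum A).toFinset
        (fun μ => ‖μ‖₊) (by simpa [Set.Finite.toFinset_nonempty] using hne)
      have h1 : (‖μ0‖₊ : ℝ≥0∞) < 1 := by
        rw [ENNReal.coe_lt_one_iff, ← NNReal.coe_lt_one, coe_nnnorm]
        exact hA μ0 ((Set.Finite.mem_toFinset _).mp hμ0mem)
      refine lt_of_le_of_lt (iSup₂_le fun μ hμ => ?_) h1
      exact_mod_cast hμ0 μ ((Set.Finite.mem_toFinset _).mpr hμ)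
  obtain ⟨r, hr1, hr2⟩ := ENNReal.lt_iff_exists_nnreal_btwn.mp hρ
  refine ⟨r, by exact_mod_cast hr2, ?_⟩
  have hg := spectrum.pow_nnnorm_pow_one_div_tendsto_nhds_spectralRadius A
  have hev := hg.eventually_lt_const hr1
  filter_upwards [hev, eventually_ge_atTop 1] with k hk hk1
  have hk0 : (k : ℝ) ≠ 0 := by positivity
  have h2 : ((‖A ^ k‖₊ : ℝ≥0∞) ^ (1 / (k:ℝ))) ^ (k : ℝ) < (r : ℝ≥0∞) ^ (k : ℝ) :=
    ENNReal.rpow_lt_rpow hk (by positivity)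
  rw [← ENNReal.rpow_mul, one_div_mul_cancel hk0, ENNReal.rpow_one] at h2
  have h3 : (r : ℝ≥0∞) ^ (k : ℝ) = ((r ^ k : ℝ≥0) : ℝ≥0∞) := by
    rw [← ENNReal.coe_rpow_of_nonneg _ (by positivity), NNReal.rpow_natCast]
  rw [h3] at h2
  exact_mod_cast h2.le

end Aux3

section Main
variable {n : ℕ}

lemma myMulVecMono (N : Matrix (Fin n) (Fin n) ℝ) (hN : ∀ i j, 0 ≤ N i j)
    {a b : Fin n → ℝ} (hab : ∀ i, a i ≤ b i) : ∀ i, (N *ᵥ a) i ≤ (N *ᵥ b) i := by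
  intro i
  simp only [Matrix.mulVec, dotProduct]
  exact Finset.sum_le_sum fun j _ => mul_le_mul_of_nonneg_left (hab j) (hN i j)

lemma myMulVecNonneg (N : Matrix (Fin n) (Fin n) ℝ) (hN : ∀ i j, 0 ≤ N i j)
    {a : Fin n → ℝ} (ha : ∀ i, 0 ≤ a i) : ∀ i, 0 ≤ (N *ᵥ a) i := by
  intro i
  simp only [Matrix.mulVec, dotProduct]
  exact Finset.sum_nonneg fun j _ => mul_nonneg (hN i j) (ha j)

lemma myMapMul (A B : Matrix (Fin n) (Fin n) ℝ) :
    (A * B).map Complex.ofReal = A.map Complex.ofReal * B.map Complex.ofReal :=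
  Matrix.map_mul (f := Complex.ofRealHom)

lemma myMapOne : ((1 : Matrix (Fin n) (Fin n) ℝ)).map Complex.ofReal = 1 :=
  Matrix.map_one Complex.ofReal Complex.ofReal_zero Complex.ofReal_one

lemma myMapPow (A : Matrix (Fin n) (Fin n) ℝ) (k : ℕ) :
    (A.map Complex.ofReal) ^ k = (A ^ k).map Complex.ofReal := by
  have := map_pow (Complex.ofRealHom.mapMatrix (m := Fin n)) A k
  simp only [RingHom.mapMatrix_apply] at this
  exact this.symm

theorem stmt_13 {n : ℕ} (F V : Matrix (Fin n) (Fin n) ℝ)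
    (hF : ∀ i j, 0 ≤ F i j)
    (hVZ : ∀ p q, p ≠ q → V p q ≤ 0)
    (hVunit : IsUnit V.det)
    (hVinv : ∀ i j, 0 ≤ V⁻¹ i j)
    (hirr : ¬ (V - F).IsReducibleMat)
    (u v : Fin n → ℝ) (hu : ∀ i, 0 ≤ u i) (hune : u ≠ 0)
    (hv : (V - F).mulVec v = u) :
    ((∀ μ ∈ spectrum ℂ ((F * V⁻¹).map Complex.ofReal), ‖μ‖ < 1) → ∀ i, 0 < v i) ∧
    ((∃ μ ∈ spectrum ℂ ((F * V⁻¹).map Complex.ofReal), 1 < ‖μ‖) → ∃ i, v i < 0) := by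
  have hVW : V * V⁻¹ = 1 := Matrix.mul_nonsing_inv V hVunit
  have hWV : V⁻¹ * V = 1 := Matrix.nonsing_inv_mul V hVunit
  set W := V⁻¹ with hWdef
  set N := W * F with hNdef
  have hNnn : ∀ i j, 0 ≤ N i j := fun i j => by
    rw [hNdef, Matrix.mul_apply]
    exact Finset.sum_nonneg fun k _ => mul_nonneg (hVinv i k) (hF k j)
  have hdec : v - N *ᵥ v = W *ᵥ u := by
    have h0 := congrArg (fun x => W *ᵥ x) hv
    simp only [Matrix.mulVec_mulVec] at h0
    rw [Matrix.mul_sub, hWV] at h0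
    rw [← h0, Matrix.sub_mulVec, Matrix.one_mulVec, hNdef, ← Matrix.mulVec_mulVec]
  have hkey : ∀ i, (N *ᵥ v) i ≤ v i := by
    intro i
    have h1 : 0 ≤ (W *ᵥ u) i := myMulVecNonneg W hVinv hu i
    have h2 := congrFun hdec i
    simp only [Pi.sub_apply] at h2
    linarith
  -- spectrum transfer
  have hmapWV : (W.map Complex.ofReal) * (V.map Complex.ofReal) = 1 := by
    rw [← myMapMul, hWV, myMapOne]
  have hmapVW : (V.map Complex.ofReal) * (W.map Complex.ofReal) = 1 := by
    rw [← myMapMul, hVW, myMapOne]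
  have hid : W.map Complex.ofReal * ((F * W).map Complex.ofReal) * V.map Complex.ofReal
      = N.map Complex.ofReal := by
    rw [← myMapMul, ← myMapMul]
    rw [hNdef, ← mul_assoc, mul_assoc (W * F) W V, hWV, mul_one]
  have hspec : spectrum ℂ ((F * W).map Complex.ofReal) = spectrum ℂ (N.map Complex.ofReal) := by
    rw [← hid]
    exact (mySpecConj _ _ _ hmapWV hmapVW).symm
  -- off-diagonal nonpositivity of V - F
  have hoff : ∀ p q, p ≠ q → (V - F) p q ≤ 0 := by
    intro p q hpq
    have h1 := hVZ p q hpq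
    have h2 := hF p q
    simp only [Matrix.sub_apply]
    linarith
  constructor
  · intro hall
    have hallN : ∀ μ ∈ spectrum ℂ (N.map Complex.ofReal), ‖μ‖ < 1 := by
      intro μ hμ
      exact hall μ (hspec ▸ hμ)
    have hvnn : ∀ i, 0 ≤ v i := by
      by_contra hneg
      push_neg at hneg
      obtain ⟨i0, hi0⟩ := hneg
      set z : Fin n → ℝ := fun i => max (-v i) 0 with hzdef
      have hz0 : ∀ i, 0 ≤ z i := fun i => le_max_right _ _
      have hzv : ∀ i, -v i ≤ z i := fun i => le_max_left _ _
      have hzi0 : 0 < z i0 := lt_of_lt_of_le (neg_pos.mpr hi0) (hzv i0)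
      have hNz : ∀ i, z i ≤ (N *ᵥ z) i := by
        intro i
        have h1 : (N *ᵥ (-v)) i ≤ (N *ᵥ z) i := myMulVecMono N hNnn (fun j => hzv j) i
        rw [Matrix.mulVec_neg] at h1
        simp only [Pi.neg_apply] at h1
        have h3 : 0 ≤ (N *ᵥ z) i := myMulVecNonneg N hNnn hz0 i
        have h4 : -v i ≤ (N *ᵥ z) i := by linarith [hkey i]
        exact max_le h4 h3
      have hpow : ∀ k : ℕ, ∀ i, z i ≤ ((N ^ k) *ᵥ z) i := by
        intro k
        induction k with
        | zero => intro i; simp [Matrix.one_mulVec]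
        | succ k ih =>
          intro i
          have hs : (N ^ (k+1)) *ᵥ z = N *ᵥ ((N ^ k) *ᵥ z) := by
            rw [Matrix.mulVec_mulVec, ← pow_succ']
          rw [hs]
          exact le_trans (hNz i) (myMulVecMono N hNnn ih i)
      obtain ⟨r, hr1, hr2⟩ := myGelfand (N.map Complex.ofReal) hallN
      set z' : Fin n → ℂ := fun i => (z i : ℂ) with hz'def
      have hlim : Tendsto (fun k : ℕ => (r : ℝ) ^ k * ‖z'‖) atTop (𝓝 0) := by
        have h0 : Tendsto (fun k : ℕ => (r : ℝ) ^ k) atTop (𝓝 0) :=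
          tendsto_pow_atTop_nhds_zero_of_lt_one r.coe_nonneg (by exact_mod_cast hr1)
        simpa using h0.mul_const ‖z'‖
      have hev2 := hlim.eventually_lt_const hzi0
      obtain ⟨k, hk1, hk2⟩ := (hr2.and hev2).exists
      have hnorm : ‖(N.map Complex.ofReal) ^ k‖ ≤ (r : ℝ) ^ k := by
        have := hk1
        rw [← NNReal.coe_le_coe] at this
        simpa [coe_nnnorm] using this
      have hb : z i0 ≤ ‖(((N ^ k) *ᵥ z) i0 : ℂ)‖ := by
        rw [Complex.norm_real, Real.norm_eq_abs]
        exact le_trans (hpow k i0) (le_abs_self _)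
      have hmv : ((N.map Complex.ofReal) ^ k) *ᵥ z' = fun i => (((N ^ k) *ᵥ z) i : ℂ) := by
        rw [myMapPow]
        exact myMapMulVec _ _
      have hc : ‖(((N ^ k) *ᵥ z) i0 : ℂ)‖ ≤ ‖(N.map Complex.ofReal) ^ k‖ * ‖z'‖ := by
        calc ‖(((N ^ k) *ᵥ z) i0 : ℂ)‖
            = ‖(((N.map Complex.ofReal) ^ k) *ᵥ z') i0‖ := by rw [hmv]
          _ ≤ ‖((N.map Complex.ofReal) ^ k) *ᵥ z'‖ := norm_le_pi_norm _ i0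
          _ ≤ ‖(N.map Complex.ofReal) ^ k‖ * ‖z'‖ := Matrix.linfty_opNorm_mulVec _ _
      have hfinal : z i0 < z i0 := by
        refine lt_of_le_of_lt (hb.trans (hc.trans ?_)) hk2
        exact mul_le_mul_of_nonneg_right hnorm (norm_nonneg _)
      exact absurd hfinal (lt_irrefl _)
    exact myPosOfNonneg (V - F) hoff hirr u v hu hune hv hvnn
  · rintro ⟨μ, hμ, hμ1⟩
    by_contra hno
    push_neg at hno
    have hvpos : ∀ i, 0 < v i := myPosOfNonneg (V - F) hoff hirr u v hu hune hv hno
    have hcol := myCollatz N hNnn v hvpos hkey μ (hspec ▸ hμ)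
    linarith

end Main
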